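/- arXiv:1407.5968 — 2 statements merged into one kernel-verified Lean document; each statement's English description precedes it below -/
import Mathlib

section
/- Conversely, let f : S(H) → [0,∞] be a frame function on a Hilbert space H. Then the map m(M) := W_M (the weight of f on M) is a completely additive measure on L(H): m({0}) = 0 and m(⋁ᵢ Mᵢ) = ∑ᵢ m(Mᵢ) for any family of pairwise orthogonal closed subspaces Mᵢ. -/
open scoped InnerProductSpace ENNReal

/-- An orthonormal family whose closed span is the closed subspace `M`,
i.e. an orthonormal basis of `M`. -/
def IsONBasisOf {H : Type} [NormedAddCommGroup H] [InnerProductSpace ℂ H]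
    {ι : Type} (x : ι → H) (M : Submodule ℂ H) : Prop :=
  Orthonormal ℂ x ∧ (Submodule.span ℂ (Set.range x)).topologicalClosure = M

lemma exists_onbasis {H : Type} [NormedAddCommGroup H] [InnerProductSpace ℂ H]
    [CompleteSpace H] (M : Submodule ℂ H) (hM : IsClosed ((M : Set H))) :
    ∃ (ι : Type) (x : ι → H), IsONBasisOf x M := by
  haveI : CompleteSpace M := hM.completeSpace_coe
  obtain ⟨w, b, hb⟩ := exists_hilbertBasis ℂ M
  refine ⟨w, fun i => ((i : M) : H), ?_, ?_⟩
  · have := b.orthonormal.comp_linearIsometry (M.subtypeₗᵢ)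
    simpa [hb, Function.comp_def] using this
  · have hrange : Set.range (fun i : w => ((i : M) : H))
        = M.subtype '' (Set.range b) := by
      rw [hb]
      ext y
      simp [Set.range_comp]
    have hspan : Submodule.span ℂ (Set.range (fun i : w => ((i : M) : H)))
        = (Submodule.span ℂ (Set.range b)).map M.subtype := by
      rw [hrange, Submodule.span_image]
    rw [hspan]
    apply le_antisymm
    · apply Submodule.topologicalClosure_minimal
      · rintro y ⟨z, _, rfl⟩; exact z.2
      · exact hM
    · intro y hy
      have hdense : Dense ((Submodule.span ℂ (Set.range b) : Set M)) :=
        Submodule.dense_iff_topologicalClosure_eq_top.mpr b.dense_span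
      have : (⟨y, hy⟩ : M) ∈ closure ((Submodule.span ℂ (Set.range b) : Set M)) :=
        hdense _
      have himg := image_closure_subset_closure_image
        (f := ((↑) : M → H)) (s := (Submodule.span ℂ (Set.range b) : Set M))
        continuous_subtype_val
      have h2 : y ∈ closure (((↑) : M → H) ''
          (Submodule.span ℂ (Set.range b) : Set M)) :=
        himg ⟨⟨y, hy⟩, this, rfl⟩
      rw [← SetLike.mem_coe, Submodule.topologicalClosure_coe, Submodule.map_coe,
        Submodule.coe_subtype]
      exact h2

/-- If `f : S(H) → [0,∞]` is a frame function with weight `m M` on each closed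
subspace `M` (i.e. `∑ᵢ f xᵢ = m M` for each orthonormal basis `{xᵢ}` of `M`), then
`m` is a completely additive measure on `L(H)`: `m ⊥ = 0` and
`m (⋁ᵢ Mᵢ) = ∑ᵢ m Mᵢ` for pairwise orthogonal closed subspaces `Mᵢ`. -/
theorem frame_function_gives_completely_additive_measure {H : Type}
    [NormedAddCommGroup H] [InnerProductSpace ℂ H] [CompleteSpace H]
    (f : H → ℝ≥0∞) (m : Submodule ℂ H → ℝ≥0∞)
    (hfm : ∀ M : Submodule ℂ H, IsClosed ((M : Set H)) →
      ∀ (ι : Type) (x : ι → H), IsONBasisOf x M → ∑' i, f (x i) = m M) :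
    m ⊥ = 0 ∧
      ∀ (ι : Type) (M : ι → Submodule ℂ H),
        (∀ i, IsClosed ((M i : Set H))) →
        (∀ i j, i ≠ j → ∀ u ∈ M i, ∀ v ∈ M j, ⟪u, v⟫_ℂ = 0) →
        m ((⨆ i, M i).topologicalClosure) = ∑' i, m (M i) := by
  constructor
  · have h := hfm ⊥ (by simpa using isClosed_singleton (x := (0 : H)))
      Empty (fun e => e.elim) ?_
    · rw [← h]; simp
    · constructor
      · rw [orthonormal_iff_ite]; rintro ⟨⟩
      · rw [Set.range_eq_empty]
        rw [Submodule.span_empty]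
        exact le_antisymm (Submodule.topologicalClosure_minimal _ le_rfl
          (by simpa using isClosed_singleton (x := (0 : H))))
          (Submodule.le_topologicalClosure _)
  · intro ι M hMc hMo
    classical
    -- choose bases
    choose κ x hx using fun i => exists_onbasis (M i) (hMc i)
    -- combined family
    set y : (Σ i, κ i) → H := fun p => x p.1 p.2 with hy
    have hyon : Orthonormal ℂ y := by
      rw [orthonormal_iff_ite]
      rintro ⟨i, a⟩ ⟨j, b⟩
      by_cases hij : i = j
      · subst hij
        have := (orthonormal_iff_ite.mp (hx i).1) a b
        simp only [y]
        rw [this]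
        by_cases hab : a = b <;> simp [hab]
      · have hu : x i a ∈ M i := by
          rw [← (hx i).2]
          exact Submodule.le_topologicalClosure _
            (Submodule.subset_span (Set.mem_range_self a))
        have hv : x j b ∈ M j := by
          rw [← (hx j).2]
          exact Submodule.le_topologicalClosure _
            (Submodule.subset_span (Set.mem_range_self b))
        have := hMo i j hij _ hu _ hv
        simp only [y]
        rw [this]
        simp [hij]
    have hspany : (Submodule.span ℂ (Set.range y)).topologicalClosure
        = (⨆ i, M i).topologicalClosure := by
      have h1 : Submodule.span ℂ (Set.range y)
          = ⨆ i, Submodule.span ℂ (Set.range (x i)) := by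
        have : Set.range y = ⋃ i, Set.range (x i) := by
          ext z
          constructor
          · rintro ⟨⟨i, a⟩, rfl⟩; exact Set.mem_iUnion.2 ⟨i, a, rfl⟩
          · rintro h
            obtain ⟨i, a, rfl⟩ := Set.mem_iUnion.1 h
            exact ⟨⟨i, a⟩, rfl⟩
        rw [this, Submodule.span_iUnion]
      rw [h1]
      apply le_antisymm
      · apply Submodule.topologicalClosure_mono
        apply iSup_mono
        intro i
        rw [← (hx i).2]
        exact Submodule.le_topologicalClosure _
      · apply Submodule.topologicalClosure_minimal
        · apply iSup_le
          intro i
          rw [← (hx i).2]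
          exact Submodule.topologicalClosure_mono (le_iSup (fun i => Submodule.span ℂ (Set.range (x i))) i)
        · exact Submodule.isClosed_topologicalClosure _
    have hmain := hfm _ (Submodule.isClosed_topologicalClosure _) _ y ⟨hyon, hspany⟩
    rw [← hmain]
    have : ∀ i, m (M i) = ∑' a : κ i, f (x i a) :=
      fun i => (hfm (M i) (hMc i) (κ i) (x i) (hx i)).symm
    simp_rw [this]
    simp only [hy]
    exact ENNReal.tsum_sigma' _
end

section
/- Let H be a finite-dimensional complex Hilbert space and f : S(H) → ℝ a frame function that is semibounded, i.e., K := inf{f(x) : x ∈ S(H)} > −∞. Then f is bounded: sup{|f(x)| : x ∈ S(H)} < ∞. In fact |f(y)| ≤ |W_H| + (n−1)|K| for every unit vector y, where n = dim H and W_H is the weight of f on H. -/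
/-- A semibounded frame function on a finite-dimensional complex Hilbert space is
bounded: if `K ≤ f x` for all unit `x` and every orthonormal basis sums to `W`,
then `|f y| ≤ |W| + (n-1)|K|` for every unit vector `y`, where `n = dim H`. -/
theorem semibounded_frame_function_bounded {H : Type} [NormedAddCommGroup H]
    [InnerProductSpace ℂ H] [FiniteDimensional ℂ H] (f : H → ℝ) (W K : ℝ)
    (hW : ∀ b : OrthonormalBasis (Fin (Module.finrank ℂ H)) ℂ H,
      ∑ i, f (b i) = W)
    (hK : ∀ x : H, ‖x‖ = 1 → K ≤ f x) :
    ∀ y : H, ‖y‖ = 1 → |f y| ≤ |W| + (Module.finrank ℂ H - 1 : ℝ) * |K| := by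
  intro y hy
  set n := Module.finrank ℂ H with hn
  have hn0 : 0 < n := by
    rcases Nat.eq_zero_or_pos n with h | h
    · exfalso
      have : Subsingleton H := (Module.finrank_zero_iff (R := ℂ)).mp h
      have : y = 0 := Subsingleton.elim y 0
      rw [this, norm_zero] at hy; norm_num at hy
    · exact h
  set i₀ : Fin n := ⟨0, hn0⟩
  -- extend y to an orthonormal basis
  have horth : Orthonormal ℂ (Set.restrict ({i₀} : Set (Fin n)) (fun _ : Fin n => y)) := by
    constructor
    · intro i; exact hy
    · intro i j hij
      exfalso
      exact hij (Subtype.ext (by rw [i.2, j.2]))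
  obtain ⟨b, hb⟩ := horth.exists_orthonormalBasis_extension_of_card_eq
    (by simp [hn]) (v := fun _ => y) (s := ({i₀} : Set (Fin n)))
  have hbi₀ : b i₀ = y := hb i₀ rfl
  have hsum : f y + ∑ i ∈ Finset.univ.erase i₀, f (b i) = W := by
    rw [← hW b, ← hbi₀]
    rw [add_comm, Finset.sum_erase_add _ _ (Finset.mem_univ i₀)]
  have hcard : (Finset.univ.erase i₀).card = n - 1 := by
    rw [Finset.card_erase_of_mem (Finset.mem_univ i₀), Finset.card_univ, Fintype.card_fin]
  have hS : ((n : ℝ) - 1) * K ≤ ∑ i ∈ Finset.univ.erase i₀, f (b i) := by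
    have := Finset.card_nsmul_le_sum (Finset.univ.erase i₀) (fun i => f (b i)) K
      (fun i _ => hK (b i) (b.orthonormal.1 i))
    rw [hcard] at this
    have hcast : ((n - 1 : ℕ) : ℝ) = (n : ℝ) - 1 := by
      rw [Nat.cast_sub hn0]; norm_num
    calc ((n : ℝ) - 1) * K = ((n - 1 : ℕ) : ℝ) * K := by rw [hcast]
      _ = (n - 1 : ℕ) • K := by rw [nsmul_eq_mul]
      _ ≤ _ := this
  have hfy_le : f y ≤ W - ((n : ℝ) - 1) * K := by linarith
  have hn1 : (1 : ℝ) ≤ (n : ℝ) := by exact_mod_cast hn0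
  have habsK : -(((n : ℝ) - 1) * K) ≤ ((n : ℝ) - 1) * |K| := by
    rw [← mul_neg]
    exact mul_le_mul_of_nonneg_left (neg_le_abs K) (by linarith)
  rw [abs_le]
  constructor
  · -- lower bound on f y
    rcases eq_or_lt_of_le hn1 with h1 | h1
    · -- n = 1 : the erased sum is empty, so f y = W
      have hne : n = 1 := by exact_mod_cast h1.symm
      have hempty : Finset.univ.erase i₀ = (∅ : Finset (Fin n)) := by
        apply Finset.card_eq_zero.mp
        rw [hcard, hne]
      rw [hempty, Finset.sum_empty, add_zero] at hsum
      have : (n : ℝ) - 1 = 0 := by rw [hne]; norm_num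
      rw [this, zero_mul, add_zero, hsum]
      exact neg_abs_le W
    · -- n ≥ 2 : f y ≥ K ≥ -|K| ≥ -(n-1)|K|
      have h2 : (1 : ℝ) ≤ (n : ℝ) - 1 := by
        have : (2 : ℝ) ≤ (n : ℝ) := by
          have : 2 ≤ n := by exact_mod_cast (by exact_mod_cast h1 : (1:ℕ) < n)
          exact_mod_cast this
        linarith
      have hKle : -|K| ≤ K := neg_abs_le K
      have : -(((n : ℝ) - 1) * |K|) ≤ -|K| := by nlinarith [abs_nonneg K]
      have hfyK := hK y hy
      have hWnn : -|W| ≤ 0 := neg_nonpos_of_nonneg (abs_nonneg W)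
      nlinarith [abs_nonneg K, abs_nonneg W]
  · calc f y ≤ W - ((n : ℝ) - 1) * K := hfy_le
      _ = W + (-(((n : ℝ) - 1) * K)) := by ring
      _ ≤ |W| + ((n : ℝ) - 1) * |K| := add_le_add (le_abs_self W) habsK
end
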